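/- Let L > 0, x₀ ∈ [0, L/2), q = (L/2 - x₀)/(L/2 + x₀), and let p ∈ ℕ with Φ(x) := √(2/L)·sin((pπ/L)(L/2 - x)) satisfying Φ(x₀) = 0. Define Υ(x) = -√q·Φ(x) for -L/2 ≤ x ≤ x₀ and Υ(x) = (1/√q)·Φ(x) for x₀ < x ≤ L/2. Then ∫_{-L/2}^{L/2} Υ(x)² dx = 1 and (∫_{x₀}^{L/2} Υ(x)² dx) / (∫_{-L/2}^{x₀} Υ(x)² dx) = 1/q. -/

import Mathlib

open Real MeasureTheory intervalIntegral

theorem stmt_8 (L x₀ : ℝ) (hL : 0 < L) (hx₀ : 0 ≤ x₀) (hx₀' : x₀ < L/2)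
    (q : ℝ) (hq : q = (L/2 - x₀)/(L/2 + x₀))
    (p : ℕ) (hp : 0 < p)
    (Φ : ℝ → ℝ) (hΦ : ∀ x, Φ x = Real.sqrt (2/L) * Real.sin ((p*π/L)*(L/2 - x)))
    (hΦ0 : Φ x₀ = 0)
    (Υ : ℝ → ℝ)
    (hΥ : ∀ x, Υ x = if x ≤ x₀ then -Real.sqrt q * Φ x else (1/Real.sqrt q) * Φ x) :
    (∫ x in (-(L/2))..(L/2), (Υ x)^2) = 1 ∧
    (∫ x in x₀..(L/2), (Υ x)^2) / (∫ x in (-(L/2))..x₀, (Υ x)^2) = 1/q := by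
  have hL2 : (0:ℝ) < L/2 := by linarith
  have hLp : (0:ℝ) < 2/L := by positivity
  have hqpos : 0 < q := by
    rw [hq]; apply div_pos <;> linarith
  set c : ℝ := (p:ℝ)*π/L with hc
  have hppos : (0:ℝ) < (p:ℝ) := by exact_mod_cast hp
  have hcpos : 0 < c := by
    rw [hc]; positivity
  -- sin facts
  have hsx₀ : Real.sin (c*(L/2 - x₀)) = 0 := by
    have h : Real.sqrt (2/L) * Real.sin (c*(L/2 - x₀)) = 0 := (hΦ x₀).symm.trans hΦ0
    have hs : Real.sqrt (2/L) ≠ 0 := by positivity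
    rcases mul_eq_zero.mp h with h' | h'
    · exact absurd h' hs
    · exact h'
  have hsL : Real.sin (c*L) = 0 := by
    have hcL : c*L = (p:ℝ)*π := by
      rw [hc]; field_simp
    rw [hcL]
    exact Real.sin_nat_mul_pi p
  have hd1 : Real.sin (2*c*(L/2 - x₀)) = 0 := by
    rw [mul_assoc, Real.sin_two_mul, hsx₀]; ring
  have hd2 : Real.sin (2*c*L) = 0 := by
    rw [mul_assoc, Real.sin_two_mul, hsL]; ring
  -- antiderivative
  set F : ℝ → ℝ := fun x => (2/L)*(x/2 + Real.sin (2*c*(L/2-x))/(4*c)) with hFdef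
  have hF : ∀ x, HasDerivAt F ((2/L) * Real.sin (c*(L/2-x))^2) x := by
    intro x
    have h0 : HasDerivAt (fun x : ℝ => L/2 - x) (-1) x := (hasDerivAt_id x).const_sub (L/2)
    have h1 : HasDerivAt (fun x : ℝ => 2*c*(L/2-x)) (2*c*(-1)) x := h0.const_mul (2*c)
    have h2 := h1.sin
    have h3 := h2.div_const (4*c)
    have h4 := (hasDerivAt_id x).div_const 2
    have h5 := (h4.add h3).const_mul (2/L)
    convert h5 using 1
    · rfl
    · rfl
    · rfl
    have hcs : Real.cos (2*c*(L/2-x)) = Real.cos (2*(c*(L/2-x))) := by rw [mul_assoc]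
    rw [Real.sin_sq_eq_half_sub, ← hcs]
    field_simp
    ring
  have hcont : Continuous (fun x => (2/L) * Real.sin (c*(L/2-x))^2) := by fun_prop
  have hint : ∀ a b : ℝ, (∫ x in a..b, (2/L) * Real.sin (c*(L/2-x))^2) = F b - F a := by
    intro a b
    exact intervalIntegral.integral_eq_sub_of_hasDerivAt (fun x _ => hF x)
      (hcont.intervalIntegrable a b)
  have hz1 : Real.sin (2*c*(L/2 - (-(L/2)))) = 0 := by
    have : L/2 - (-(L/2)) = L := by ring
    rw [this]; exact hd2
  have hz2 : Real.sin (2*c*(L/2 - L/2)) = 0 := by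
    simp
  have hI1 : (∫ x in (-(L/2))..x₀, (2/L) * Real.sin (c*(L/2-x))^2) = (L/2 + x₀)/L := by
    rw [hint]
    simp only [hFdef]
    rw [hd1, hz1]
    simp only [zero_div, add_zero]
    field_simp
    ring
  have hI2 : (∫ x in x₀..(L/2), (2/L) * Real.sin (c*(L/2-x))^2) = (L/2 - x₀)/L := by
    rw [hint]
    simp only [hFdef]
    rw [hd1, hz2]
    simp only [zero_div, add_zero]
    field_simp
  have hq1 : Real.sqrt q ^ 2 = q := Real.sq_sqrt hqpos.le
  have hq2 : Real.sqrt (2/L) ^ 2 = 2/L := Real.sq_sqrt hLp.le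
  -- EqOn facts
  have heq1 : Set.EqOn (fun x => Υ x^2) (fun x => q * ((2/L) * Real.sin (c*(L/2-x))^2))
      (Set.uIcc (-(L/2)) x₀) := by
    intro x hx
    rw [Set.uIcc_of_le (by linarith)] at hx
    simp only [hΥ x, if_pos hx.2, hΦ x]
    have h : (-Real.sqrt q * (Real.sqrt (2/L) * Real.sin (c*(L/2-x))))^2
        = Real.sqrt q ^2 * (Real.sqrt (2/L)^2 * Real.sin (c*(L/2-x))^2) := by ring
    rw [h, hq1, hq2]
  have heq2 : Set.EqOn (fun x => Υ x^2) (fun x => (1/q) * ((2/L) * Real.sin (c*(L/2-x))^2))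
      (Set.uIcc x₀ (L/2)) := by
    intro x hx
    rw [Set.uIcc_of_le (by linarith)] at hx
    by_cases hxle : x ≤ x₀
    · have hxe : x = x₀ := le_antisymm hxle hx.1
      subst hxe
      simp only [hΥ x, if_pos hxle, hΦ0, hsx₀]
      ring
    · simp only [hΥ x, if_neg hxle, hΦ x]
      have h : (1/Real.sqrt q * (Real.sqrt (2/L) * Real.sin (c*(L/2-x))))^2
          = 1/(Real.sqrt q ^2) * (Real.sqrt (2/L)^2 * Real.sin (c*(L/2-x))^2) := by ring
      rw [h, hq1, hq2]
  have hA : (∫ x in (-(L/2))..x₀, Υ x^2) = (L/2 - x₀)/L := by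
    rw [intervalIntegral.integral_congr heq1, intervalIntegral.integral_const_mul, hI1, hq]
    have h1 : L/2 + x₀ ≠ 0 := by linarith
    field_simp
  have hB : (∫ x in x₀..(L/2), Υ x^2) = (L/2 + x₀)/L := by
    have h1 : L/2 - x₀ ≠ 0 := by linarith
    have h2 : L - 2*x₀ ≠ 0 := fun h => h1 (by linarith)
    have hinv : 1/q = (L/2+x₀)/(L/2-x₀) := by rw [hq, one_div_div]
    rw [intervalIntegral.integral_congr heq2, intervalIntegral.integral_const_mul, hI2, hinv]
    field_simp
  have hi1 : IntervalIntegrable (fun x => Υ x^2) volume (-(L/2)) x₀ := by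
    refine (((continuous_const.mul hcont : Continuous fun x => q * (2/L * Real.sin (c*(L/2-x))^2)).intervalIntegrable _ _)).congr ?_
    intro x hx
    exact (heq1 (Set.uIoc_subset_uIcc hx)).symm
  have hi2 : IntervalIntegrable (fun x => Υ x^2) volume x₀ (L/2) := by
    refine (((continuous_const.mul hcont : Continuous fun x => (1/q) * (2/L * Real.sin (c*(L/2-x))^2)).intervalIntegrable _ _)).congr ?_
    intro x hx
    exact (heq2 (Set.uIoc_subset_uIcc hx)).symm
  constructor
  · rw [← intervalIntegral.integral_add_adjacent_intervals hi1 hi2, hA, hB]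
    field_simp
    ring
  · rw [hA, hB, hq]
    have h1 : L/2 - x₀ ≠ 0 := by linarith
    have h2 : L/2 + x₀ ≠ 0 := by linarith
    field_simp
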